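/- Let A ⊆ [n], let h : {±1/√n}^n → {±1} be a function depending only on the coordinates in A, let w ∈ {−1,0,1}^n, b ∈ ℝ, and let D be a product-form distribution under which the coordinates in A and the coordinates outside A are independent, with the coordinates outside A i.i.d. uniform on {±1/√n}. Set J = {j ∉ A : w_j ≠ 0} and φ(w,b) = P(k/√n < ∑_{j∈J} w_j x_j + b < 6 − k/√n), assuming ∑_{j∈A} |w_j| ≤ k. Then |E[h(x)·σ'(⟨w,x⟩ + b)] − E[h(x)]·φ(w,b)| ≤ Ck/√|J| for a universal constant C, where σ'(z) = 1{0 < z < 6} is the derivative of the ReLU6 activation. -/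

import Mathlib

open Finset Polynomial
open scoped BigOperators Classical

lemma cb_sq (t : ℕ) : (Nat.centralBinom t)^2 * (2*t+1) ≤ 16^t := by
  induction t with
  | zero => simp
  | succ t ih =>
    have key := Nat.succ_mul_centralBinom_succ t
    have e1 : (t+1)^2 * ((Nat.centralBinom (t+1))^2 * (2*(t+1)+1))
        = 4*(2*t+1)*(2*t+3) * ((Nat.centralBinom t)^2 * (2*t+1)) := by
      rw [show (t+1)^2 * ((Nat.centralBinom (t+1))^2 * (2*(t+1)+1))
          = ((t+1) * Nat.centralBinom (t+1))^2 * (2*t+3) from by ring, key]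
      ring
    have main : (t+1)^2 * ((Nat.centralBinom (t+1))^2 * (2*(t+1)+1))
        ≤ (t+1)^2 * 16^(t+1) :=
      calc (t+1)^2 * ((Nat.centralBinom (t+1))^2 * (2*(t+1)+1))
          = 4*(2*t+1)*(2*t+3) * ((Nat.centralBinom t)^2 * (2*t+1)) := e1
        _ ≤ 4*(2*t+1)*(2*t+3) * 16^t := Nat.mul_le_mul_left _ ih
        _ ≤ ((t+1)^2 * 16) * 16^t := Nat.mul_le_mul_right _ (by nlinarith)
        _ = (t+1)^2 * 16^(t+1) := by ring
    exact Nat.le_of_mul_le_mul_left main (by positivity)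

lemma cb_sqrt (t : ℕ) : (Nat.centralBinom t : ℝ) * Real.sqrt (2*t+1) ≤ 4^t := by
  have h : ((Nat.centralBinom t : ℝ))^2 * (2*t+1) ≤ 16^t := by
    exact_mod_cast Nat.cast_le.mpr (cb_sq t)
  have e : (Nat.centralBinom t : ℝ) * Real.sqrt (2*t+1)
      = Real.sqrt ((Nat.centralBinom t : ℝ)^2 * (2*t+1)) := by
    rw [Real.sqrt_mul (by positivity), Real.sqrt_sq (by positivity)]
  have e16 : (16:ℝ)^t = ((4:ℝ)^t)^2 := by
    calc (16:ℝ)^t = ((4:ℝ)^2)^t := by norm_num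
      _ = (4:ℝ)^(2*t) := (pow_mul 4 2 t).symm
      _ = ((4:ℝ)^t)^2 := by rw [mul_comm, pow_mul]
  rw [e]
  calc Real.sqrt ((Nat.centralBinom t : ℝ)^2 * (2*t+1)) ≤ Real.sqrt (16^t) :=
        Real.sqrt_le_sqrt h
    _ = 4^t := by rw [e16, Real.sqrt_sq (by positivity)]

lemma choose_sqrt (m r : ℕ) : (m.choose r : ℝ) * Real.sqrt m ≤ 2^m := by
  rcases Nat.even_or_odd m with ⟨t, ht⟩ | ⟨t, ht⟩
  · subst ht
    have hmid : (t+t).choose ((t+t)/2) = Nat.centralBinom t := by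
      rw [Nat.centralBinom_eq_two_mul_choose, show t+t = 2*t from by ring,
        show (2*t)/2 = t from by omega]
    have hc : (((t+t).choose r : ℕ) : ℝ) ≤ (Nat.centralBinom t : ℝ) := by
      exact_mod_cast hmid ▸ Nat.choose_le_middle r (t+t)
    push_cast
    calc ((t+t).choose r : ℝ) * Real.sqrt (t+t)
        ≤ (Nat.centralBinom t : ℝ) * Real.sqrt (2*t+1) :=
          mul_le_mul hc (Real.sqrt_le_sqrt (by push_cast; linarith))
            (Real.sqrt_nonneg _) (Nat.cast_nonneg _)
      _ ≤ 4^t := cb_sqrt t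
      _ = 2^(t+t) := by
          rw [show t+t = 2*t from by ring, pow_mul]; norm_num
  · subst ht
    have hdiv : (2*t+1)/2 = t := by omega
    have hlem : (2*t+1).choose t ≤ 2 * Nat.centralBinom t := by
      have hsymm : (2*t+1).choose t = (2*t+1).choose (t+1) := by
        have := Nat.choose_symm (show t+1 ≤ 2*t+1 by omega) (n := 2*t+1)
        simpa [show 2*t+1-(t+1) = t by omega] using this
      have h2' : (2*t).choose (t+1) ≤ (2*t).choose t := by
        have h1 := Nat.choose_le_middle (t+1) (2*t)
        rwa [show (2*t)/2 = t from by omega] at h1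
      rw [hsymm, Nat.choose_succ_succ, Nat.centralBinom_eq_two_mul_choose]
      simp only [Nat.succ_eq_add_one]
      omega
    have hc : (((2*t+1).choose r : ℕ) : ℝ) ≤ 2 * (Nat.centralBinom t : ℝ) := by
      have h1 := Nat.choose_le_middle r (2*t+1)
      rw [hdiv] at h1
      exact_mod_cast le_trans h1 hlem
    push_cast
    calc ((2*t+1).choose r : ℝ) * Real.sqrt (2*t+1)
        ≤ (2 * (Nat.centralBinom t : ℝ)) * Real.sqrt (2*t+1) :=
          mul_le_mul_of_nonneg_right hc (Real.sqrt_nonneg _)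
      _ = 2 * ((Nat.centralBinom t : ℝ) * Real.sqrt (2*t+1)) := by ring
      _ ≤ 2 * 4^t := by linarith [cb_sqrt t]
      _ = 2^(2*t+1) := by
          rw [pow_succ, pow_mul]; norm_num; ring

lemma count_eq (n : ℕ) (J : Finset (Fin n)) (t : Fin n → Bool) (r : ℕ) :
    ((univ : Finset (Fin n → Bool)).filter
        (fun s => (J.filter (fun j => s j = t j)).card = r)).card
      = 2^(n - J.card) * J.card.choose r := by
  have key : (∑ s : Fin n → Bool,
      (X : Polynomial ℕ)^((J.filter (fun j => s j = t j)).card))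
      = (2 : Polynomial ℕ)^(n - J.card) * (X + 1)^J.card := by
    have e1 : ∀ s : Fin n → Bool,
        (X : Polynomial ℕ)^((J.filter (fun j => s j = t j)).card)
        = ∏ j : Fin n, (if j ∈ J then (if s j = t j then (X : Polynomial ℕ) else 1) else 1) := by
      intro s
      rw [← Finset.prod_mul_prod_compl J]
      have h2 : ∏ j ∈ Jᶜ, (if j ∈ J then (if s j = t j then (X : Polynomial ℕ) else 1) else 1)
          = 1 := Finset.prod_eq_one (fun j hj => by
            simp [Finset.mem_compl.mp hj])
      rw [h2, mul_one]
      rw [Finset.prod_congr rfl (fun j hj => if_pos hj), Finset.prod_ite,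
        Finset.prod_const, Finset.prod_const, one_pow, mul_one]
    simp_rw [e1]
    have e2 : (∑ s : Fin n → Bool, ∏ j : Fin n,
        (if j ∈ J then (if s j = t j then (X : Polynomial ℕ) else 1) else 1))
        = ∏ j : Fin n, ∑ b : Bool,
          (if j ∈ J then (if b = t j then (X : Polynomial ℕ) else 1) else 1) := by
      rw [Finset.prod_univ_sum (fun _ => (univ : Finset Bool))
        (fun j b => (if j ∈ J then (if b = t j then (X : Polynomial ℕ) else 1) else 1))]
      rw [Fintype.piFinset_univ]
    rw [e2, ← Finset.prod_mul_prod_compl J]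
    have e3 : ∏ j ∈ J, (∑ b : Bool,
        (if j ∈ J then (if b = t j then (X : Polynomial ℕ) else 1) else 1)) = (X + 1)^J.card := by
      rw [← Finset.prod_const]
      refine Finset.prod_congr rfl (fun j hj => ?_)
      rw [Fintype.sum_bool]
      simp only [if_pos hj]
      cases t j <;> simp [add_comm]
    have e4 : ∏ j ∈ Jᶜ, (∑ b : Bool,
        (if j ∈ J then (if b = t j then (X : Polynomial ℕ) else 1) else 1))
        = (2 : Polynomial ℕ)^(n - J.card) := by
      have hcard : Jᶜ.card = n - J.card := by
        rw [Finset.card_compl, Fintype.card_fin]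
      calc ∏ j ∈ Jᶜ, (∑ b : Bool,
            (if j ∈ J then (if b = t j then (X : Polynomial ℕ) else 1) else 1))
          = ∏ _j ∈ Jᶜ, (2 : Polynomial ℕ) := by
            refine Finset.prod_congr rfl (fun j hj => ?_)
            rw [Fintype.sum_bool]
            simp only [Finset.mem_compl.mp hj, if_false]
            ring
        _ = (2 : Polynomial ℕ)^Jᶜ.card := Finset.prod_const _
        _ = (2 : Polynomial ℕ)^(n - J.card) := by rw [hcard]
    rw [e3, e4, mul_comm]
  have := congrArg (fun q : Polynomial ℕ => q.coeff r) key
  rw [Polynomial.finset_sum_coeff] at this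
  simp_rw [Polynomial.coeff_X_pow] at this
  have lhs : (∑ x : Fin n → Bool,
      (if r = (J.filter (fun j => x j = t j)).card then (1:ℕ) else 0))
      = ((univ : Finset (Fin n → Bool)).filter
          (fun s => (J.filter (fun j => s j = t j)).card = r)).card := by
    simp_rw [eq_comm (a := r)]
    rw [Finset.sum_boole]
    simp
  have rhs : ((2 : Polynomial ℕ)^(n - J.card) * (X + 1)^J.card).coeff r
      = 2^(n - J.card) * J.card.choose r := by
    rw [show ((2 : Polynomial ℕ)^(n - J.card)) = Polynomial.C (2^(n - J.card)) from by
      rw [map_pow]; norm_num]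
    rw [Polynomial.coeff_C_mul, Polynomial.coeff_X_add_one_pow]
    simp
  rw [lhs, rhs] at this
  exact this

lemma prob_interval (n k : ℕ) (hk : 1 ≤ k) (J : Finset (Fin n)) (hJ : J.Nonempty)
    (v : Fin n → ℝ) (hv : ∀ j ∈ J, v j = 1 ∨ v j = -1) (c : ℝ) :
    (∑ s : Fin n → Bool,
      (if c ≤ (∑ j ∈ J, v j * (if s j then 1 else -1)) ∧
          (∑ j ∈ J, v j * (if s j then 1 else -1)) ≤ c + 2*k then (1:ℝ) else 0))
    ≤ 2^n * (2*k / Real.sqrt J.card) := by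
  classical
  set m := J.card with hmdef
  have hm : 1 ≤ m := Finset.card_pos.mpr hJ
  have hmn : m ≤ n := by
    calc m ≤ (univ : Finset (Fin n)).card := Finset.card_le_card (Finset.subset_univ J)
      _ = n := by simp
  have hsm : (0:ℝ) < Real.sqrt m := Real.sqrt_pos.mpr (by exact_mod_cast hm)
  set t : Fin n → Bool := fun j => if v j = 1 then false else true with htdef
  have hNle : ∀ s : Fin n → Bool, (J.filter (fun j => s j = t j)).card ≤ m :=
    fun s => Finset.card_filter_le _ _
  have sum_eq : ∀ s : Fin n → Bool,
      (∑ j ∈ J, v j * (if s j then 1 else -1))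
        = (m:ℝ) - 2 * (J.filter (fun j => s j = t j)).card := by
    intro s
    have e1 : ∀ j ∈ J, v j * (if s j then (1:ℝ) else -1)
        = (if s j = t j then (-1:ℝ) else 1) := by
      intro j hj
      rcases hv j hj with h | h <;> cases hsj : s j <;> simp [htdef, h, hsj] <;> try norm_num
    rw [Finset.sum_congr rfl e1, Finset.sum_ite, Finset.sum_const, Finset.sum_const]
    have hcards : (J.filter (fun j => s j = t j)).card
        + (J.filter (fun j => ¬ s j = t j)).card = m :=
      Finset.card_filter_add_card_filter_not _
    have h2 : (J.filter (fun j => ¬ s j = t j)).card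
        = m - (J.filter (fun j => s j = t j)).card := by omega
    rw [h2]
    have h3 : ((m - (J.filter (fun j => s j = t j)).card : ℕ) : ℝ)
        = (m:ℝ) - (J.filter (fun j => s j = t j)).card := by
      rw [Nat.cast_sub (hNle s)]
    simp only [nsmul_eq_mul, smul_eq_mul, h3]
    ring
  set R : Finset ℕ := (Finset.range (m+1)).filter
    (fun r => c ≤ (m:ℝ) - 2*r ∧ (m:ℝ) - 2*r ≤ c + 2*k) with hRdef
  have hRcard : R.card ≤ 2 * k := by
    rcases R.eq_empty_or_nonempty with he | hne
    · rw [he]; simp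
    · set r0 := R.min' hne with hr0
      have hr0R : r0 ∈ R := R.min'_mem hne
      have hsub : R ⊆ Finset.Icc r0 (r0 + k) := by
        intro r hr
        rw [Finset.mem_Icc]
        refine ⟨R.min'_le r hr, ?_⟩
        have h1 := (Finset.mem_filter.mp hr).2
        have h2 := (Finset.mem_filter.mp hr0R).2
        have h3 : (r:ℝ) ≤ (r0:ℝ) + (k:ℝ) := by linarith
        exact_mod_cast h3
      calc R.card ≤ (Finset.Icc r0 (r0 + k)).card := Finset.card_le_card hsub
        _ = k + 1 := by rw [Nat.card_Icc]; omega
        _ ≤ 2 * k := by omega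
  have step1 : ∀ s : Fin n → Bool,
      (if c ≤ (∑ j ∈ J, v j * (if s j then 1 else -1)) ∧
          (∑ j ∈ J, v j * (if s j then 1 else -1)) ≤ c + 2*k then (1:ℝ) else 0)
      ≤ ∑ r ∈ R, (if (J.filter (fun j => s j = t j)).card = r then (1:ℝ) else 0) := by
    intro s
    by_cases hc : c ≤ (∑ j ∈ J, v j * (if s j then 1 else -1)) ∧
        (∑ j ∈ J, v j * (if s j then 1 else -1)) ≤ c + 2*k
    · rw [if_pos hc]
      rw [sum_eq s] at hc
      have hmem : (J.filter (fun j => s j = t j)).card ∈ R :=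
        Finset.mem_filter.mpr ⟨Finset.mem_range.mpr (Nat.lt_succ_of_le (hNle s)), hc⟩
      have := Finset.single_le_sum
        (f := fun r => if (J.filter (fun j => s j = t j)).card = r then (1:ℝ) else 0)
        (fun r _ => by positivity) hmem
      simpa using this
    · rw [if_neg hc]
      exact Finset.sum_nonneg (fun r _ => by positivity)
  calc (∑ s : Fin n → Bool,
      (if c ≤ (∑ j ∈ J, v j * (if s j then 1 else -1)) ∧
          (∑ j ∈ J, v j * (if s j then 1 else -1)) ≤ c + 2*k then (1:ℝ) else 0))
      ≤ ∑ s : Fin n → Bool, ∑ r ∈ R,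
          (if (J.filter (fun j => s j = t j)).card = r then (1:ℝ) else 0) :=
        Finset.sum_le_sum (fun s _ => step1 s)
    _ = ∑ r ∈ R, ∑ s : Fin n → Bool,
          (if (J.filter (fun j => s j = t j)).card = r then (1:ℝ) else 0) := Finset.sum_comm
    _ ≤ ∑ _r ∈ R, (2:ℝ)^n / Real.sqrt m := by
        refine Finset.sum_le_sum (fun r _ => ?_)
        have hcount : (∑ s : Fin n → Bool,
            (if (J.filter (fun j => s j = t j)).card = r then (1:ℝ) else 0))
            = ((2^(n - m) * m.choose r : ℕ) : ℝ) := by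
          rw [Finset.sum_boole]
          norm_cast
          exact count_eq n J t r
        rw [hcount]
        push_cast
        have h1 : (m.choose r : ℝ) ≤ 2^m / Real.sqrt m := by
          rw [le_div_iff₀ hsm]
          exact choose_sqrt m r
        calc (2:ℝ)^(n-m) * (m.choose r : ℝ) ≤ 2^(n-m) * (2^m / Real.sqrt m) :=
              mul_le_mul_of_nonneg_left h1 (by positivity)
          _ = (2:ℝ)^n / Real.sqrt m := by
              rw [mul_div_assoc', ← pow_add, Nat.sub_add_cancel hmn]
    _ = (R.card : ℝ) * ((2:ℝ)^n / Real.sqrt m) := by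
        rw [Finset.sum_const, nsmul_eq_mul]
    _ ≤ ((2*k : ℕ) : ℝ) * ((2:ℝ)^n / Real.sqrt m) := by
        apply mul_le_mul_of_nonneg_right _ (by positivity)
        exact_mod_cast hRcard
    _ = 2^n * (2*k / Real.sqrt m) := by push_cast; ring

/-- The derivative of the ReLU6 activation: `σ'(z) = 1{0 < z < 6}`. -/
noncomputable def sigma6' (z : ℝ) : ℝ := if 0 < z ∧ z < 6 then 1 else 0

lemma pointwise (a x kk : ℝ) (ha : |a| ≤ kk) :
    |sigma6' (a + x) - (if kk < x ∧ x < 6 - kk then (1:ℝ) else 0)|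
      ≤ (if -kk ≤ x ∧ x ≤ kk then (1:ℝ) else 0)
      + (if 6 - kk ≤ x ∧ x ≤ 6 + kk then (1:ℝ) else 0) := by
  rw [abs_le] at ha
  have hkk0 : 0 ≤ kk := by linarith [ha.1, ha.2]
  simp only [sigma6']
  by_cases hB1 : -kk ≤ x ∧ x ≤ kk
  · rw [if_pos hB1]
    split_ifs <;> norm_num
  by_cases hB2 : 6 - kk ≤ x ∧ x ≤ 6 + kk
  · rw [if_pos hB2]
    split_ifs <;> norm_num
  push_neg at hB1 hB2
  have heq : (if 0 < a + x ∧ a + x < 6 then (1:ℝ) else 0)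
      = (if kk < x ∧ x < 6 - kk then (1:ℝ) else 0) := by
    apply if_congr _ rfl rfl
    constructor
    · rintro ⟨u, v⟩
      have h1 : kk < x := hB1 (by linarith)
      refine ⟨h1, ?_⟩
      by_contra hcon
      push_neg at hcon
      have := hB2 hcon
      linarith
    · rintro ⟨u, v⟩
      constructor <;> linarith
  rw [heq, sub_self, abs_zero]
  split_ifs <;> norm_num

lemma cond_iff (sn kk b x d : ℝ) (hsn : 0 < sn) :
    (d ≤ x / sn + b ∧ x / sn + b ≤ d + 2*kk/sn)
      ↔ ((d - b)*sn ≤ x ∧ x ≤ (d - b)*sn + 2*kk) := by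
  have h1 : d ≤ x/sn + b ↔ (d - b)*sn ≤ x := by
    rw [← sub_le_iff_le_add, le_div_iff₀ hsn]
  have h2 : x/sn + b ≤ d + 2*kk/sn ↔ x ≤ (d - b)*sn + 2*kk := by
    rw [← le_sub_iff_add_le, div_le_iff₀ hsn]
    have e : (d + 2*kk/sn - b)*sn = (d - b)*sn + 2*kk := by
      field_simp
      ring
    rw [e]
  exact and_congr h1 h2


/-- For a product distribution where the coordinates in `A` (sampled from a finite sample
space `Fin M` with pmf `p`) and the coordinates outside `A` (i.i.d. uniform on `{±1/√n}`) are
independent, a function `h` depending only on the `A`-coordinates, and a gate `σ'(⟨w,x⟩+b)`: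
`|E[h(x)σ'(⟨w,x⟩+b)] − E[h(x)]·φ(w,b)| ≤ Ck/√|J|` for a universal constant `C`. -/
theorem stmt_7 :
    ∃ C : ℝ, 0 < C ∧
      ∀ (n k M : ℕ), 0 < n → 0 < k → 0 < M →
        ∀ (A : Finset (Fin n)) (p : Fin M → ℝ),
          (∀ ω, 0 ≤ p ω) → (∑ ω, p ω = 1) →
        ∀ (xa : Fin M → Fin n → ℝ), (∀ ω j, j ∈ A → |xa ω j| ≤ 1 / Real.sqrt n) →
        ∀ (h : Fin M → ℝ), (∀ ω, h ω = 1 ∨ h ω = -1) →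
        ∀ (w : Fin n → ℝ), (∀ i, w i = -1 ∨ w i = 0 ∨ w i = 1) →
          (∑ j ∈ A, |w j| ≤ (k : ℝ)) →
        ∀ (b : ℝ),
        (Finset.univ.filter (fun j : Fin n => j ∉ A ∧ w j ≠ 0)).Nonempty →
        |(∑ ω, p ω * ((1 / 2 ^ n : ℝ) * ∑ s : Fin n → Bool,
            h ω * sigma6' ((∑ i, w i *
              (if i ∈ A then xa ω i else (if s i then 1 else -1) / Real.sqrt n)) + b))) -
          (∑ ω, p ω * h ω) *
            ((1 / 2 ^ n : ℝ) * ∑ s : Fin n → Bool,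
              (if ((k : ℝ) / Real.sqrt n <
                    (∑ j ∈ Finset.univ.filter (fun j : Fin n => j ∉ A ∧ w j ≠ 0),
                      w j * ((if s j then 1 else -1) / Real.sqrt n)) + b ∧
                    (∑ j ∈ Finset.univ.filter (fun j : Fin n => j ∉ A ∧ w j ≠ 0),
                      w j * ((if s j then 1 else -1) / Real.sqrt n)) + b <
                      6 - (k : ℝ) / Real.sqrt n) then 1 else 0))|
          ≤ C * k / Real.sqrt ((Finset.univ.filter
              (fun j : Fin n => j ∉ A ∧ w j ≠ 0)).card) := by
  refine ⟨4, by norm_num, ?_⟩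
  intro n k M hn hk hM A p hp hpsum xa hxa h hh w hw hwA b hJne
  set J : Finset (Fin n) := Finset.univ.filter (fun j : Fin n => j ∉ A ∧ w j ≠ 0) with hJdef
  set m : ℕ := J.card with hmdef
  have hm : 1 ≤ m := Finset.card_pos.mpr hJne
  have hsn : (0:ℝ) < Real.sqrt n := Real.sqrt_pos.mpr (by exact_mod_cast hn)
  have hsm : (0:ℝ) < Real.sqrt m := Real.sqrt_pos.mpr (by exact_mod_cast hm)
  set Ssum : (Fin n → Bool) → ℝ :=
    fun s => ∑ j ∈ J, w j * ((if s j then 1 else -1) / Real.sqrt n) with hSdef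
  set Tsum : (Fin n → Bool) → ℝ :=
    fun s => ∑ j ∈ J, w j * (if s j then 1 else -1) with hTdef
  have hTS : ∀ s, Ssum s = Tsum s / Real.sqrt n := by
    intro s
    rw [hSdef, hTdef]
    simp only
    rw [Finset.sum_div]
    exact Finset.sum_congr rfl (fun j _ => by ring)
  set a : Fin M → ℝ := fun ω => ∑ i ∈ A, w i * xa ω i with hadef
  -- decomposition of the inner product
  have decomp : ∀ (ω : Fin M) (s : Fin n → Bool),
      (∑ i, w i * (if i ∈ A then xa ω i else (if s i then 1 else -1) / Real.sqrt n))
        = a ω + Ssum s := by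
    intro ω s
    rw [← Finset.sum_filter_add_sum_filter_not Finset.univ (fun i => i ∈ A)]
    congr 1
    · have hA : Finset.univ.filter (fun i : Fin n => i ∈ A) = A := by
        ext i; simp
      rw [hA, hadef]
      exact Finset.sum_congr rfl (fun i hi => by rw [if_pos hi])
    · have hsub : J ⊆ Finset.univ.filter (fun i : Fin n => ¬ i ∈ A) := by
        intro i hi
        simp only [hJdef, Finset.mem_filter, Finset.mem_univ, true_and] at hi ⊢
        exact hi.1
      have hzero : ∀ i ∈ Finset.univ.filter (fun i : Fin n => ¬ i ∈ A), i ∉ J →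
          w i * (if i ∈ A then xa ω i else (if s i then 1 else -1) / Real.sqrt n) = 0 := by
        intro i hi hni
        simp only [Finset.mem_filter, Finset.mem_univ, true_and] at hi
        simp only [hJdef, Finset.mem_filter, Finset.mem_univ, true_and, not_and, not_not] at hni
        rw [hni hi, zero_mul]
      rw [← Finset.sum_subset hsub hzero]
      refine Finset.sum_congr rfl (fun i hi => ?_)
      simp only [hJdef, Finset.mem_filter, Finset.mem_univ, true_and] at hi
      rw [if_neg hi.1]
  have habs : ∀ ω, |a ω| ≤ (k:ℝ) / Real.sqrt n := by
    intro ω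
    calc |a ω| ≤ ∑ i ∈ A, |w i * xa ω i| := Finset.abs_sum_le_sum_abs _ _
      _ ≤ ∑ i ∈ A, |w i| * (1 / Real.sqrt n) := by
          refine Finset.sum_le_sum (fun i hi => ?_)
          rw [abs_mul]
          exact mul_le_mul_of_nonneg_left (hxa ω i hi) (abs_nonneg _)
      _ = (∑ i ∈ A, |w i|) * (1 / Real.sqrt n) := (Finset.sum_mul _ _ _).symm
      _ ≤ (k:ℝ) * (1 / Real.sqrt n) := mul_le_mul_of_nonneg_right hwA (by positivity)
      _ = (k:ℝ) / Real.sqrt n := by ring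
  set Ind : (Fin n → Bool) → ℝ := fun s =>
    if ((k : ℝ) / Real.sqrt n < Ssum s + b ∧ Ssum s + b < 6 - (k : ℝ) / Real.sqrt n)
    then 1 else 0 with hInddef
  set Q : ℝ := (1 / 2 ^ n : ℝ) * ∑ s : Fin n → Bool, Ind s with hQdef
  set P : Fin M → ℝ := fun ω =>
    (1 / 2 ^ n : ℝ) * ∑ s : Fin n → Bool, sigma6' (a ω + Ssum s + b) with hPdef
  -- the two bad indicator sums
  have hv : ∀ j ∈ J, w j = 1 ∨ w j = -1 := by
    intro j hj
    simp only [hJdef, Finset.mem_filter, Finset.mem_univ, true_and] at hj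
    rcases hw j with h' | h' | h'
    · exact Or.inr h'
    · exact absurd h' hj.2
    · exact Or.inl h'
  have probbound : ∀ d : ℝ,
      (1 / 2 ^ n : ℝ) * (∑ s : Fin n → Bool,
        (if d ≤ Ssum s + b ∧ Ssum s + b ≤ d + 2*(k:ℝ)/Real.sqrt n then (1:ℝ) else 0))
      ≤ 2*(k:ℝ) / Real.sqrt m := by
    intro d
    have hcong : ∀ s : Fin n → Bool,
        (if d ≤ Ssum s + b ∧ Ssum s + b ≤ d + 2*(k:ℝ)/Real.sqrt n then (1:ℝ) else 0)
        = (if (d - b)*Real.sqrt n ≤ Tsum s ∧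
              Tsum s ≤ (d - b)*Real.sqrt n + 2*(k:ℝ) then (1:ℝ) else 0) := by
      intro s
      apply if_congr _ rfl rfl
      rw [hTS s]
      exact cond_iff (Real.sqrt n) k b (Tsum s) d hsn
    rw [Finset.sum_congr rfl (fun s _ => hcong s)]
    have hpi := prob_interval n k hk J hJne w hv ((d - b)*Real.sqrt n)
    rw [← hmdef] at hpi
    calc (1 / 2 ^ n : ℝ) * (∑ s : Fin n → Bool,
        (if (d - b)*Real.sqrt n ≤ Tsum s ∧
            Tsum s ≤ (d - b)*Real.sqrt n + 2*(k:ℝ) then (1:ℝ) else 0))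
        ≤ (1 / 2 ^ n : ℝ) * (2^n * (2*(k:ℝ) / Real.sqrt m)) := by
          apply mul_le_mul_of_nonneg_left _ (by positivity)
          exact hpi
      _ = 2*(k:ℝ) / Real.sqrt m := by
          field_simp
  -- core bound
  have core : ∀ ω, |P ω - Q| ≤ 4*(k:ℝ) / Real.sqrt m := by
    intro ω
    have hPQ : P ω - Q = (1 / 2 ^ n : ℝ) * ∑ s : Fin n → Bool,
        (sigma6' (a ω + Ssum s + b) - Ind s) := by
      rw [hPdef, hQdef, Finset.sum_sub_distrib, mul_sub]
    rw [hPQ, abs_mul, abs_of_pos (show (0:ℝ) < (1/2^n : ℝ) by positivity)]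
    have habs2 : |∑ s : Fin n → Bool, (sigma6' (a ω + Ssum s + b) - Ind s)|
        ≤ ∑ s : Fin n → Bool,
            ((if -((k:ℝ)/Real.sqrt n) ≤ Ssum s + b ∧ Ssum s + b ≤ (k:ℝ)/Real.sqrt n
              then (1:ℝ) else 0)
            + (if 6 - (k:ℝ)/Real.sqrt n ≤ Ssum s + b ∧ Ssum s + b ≤ 6 + (k:ℝ)/Real.sqrt n
              then (1:ℝ) else 0)) := by
      refine le_trans (Finset.abs_sum_le_sum_abs _ _) (Finset.sum_le_sum (fun s _ => ?_))
      have hp := pointwise (a ω) (Ssum s + b) ((k:ℝ)/Real.sqrt n) (habs ω)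
      rw [← add_assoc] at hp
      exact hp
    calc (1/2^n : ℝ) * |∑ s : Fin n → Bool, (sigma6' (a ω + Ssum s + b) - Ind s)|
        ≤ (1/2^n : ℝ) * ∑ s : Fin n → Bool,
            ((if -((k:ℝ)/Real.sqrt n) ≤ Ssum s + b ∧ Ssum s + b ≤ (k:ℝ)/Real.sqrt n
              then (1:ℝ) else 0)
            + (if 6 - (k:ℝ)/Real.sqrt n ≤ Ssum s + b ∧ Ssum s + b ≤ 6 + (k:ℝ)/Real.sqrt n
              then (1:ℝ) else 0)) :=
          mul_le_mul_of_nonneg_left habs2 (by positivity)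
      _ = (1/2^n : ℝ) * (∑ s : Fin n → Bool,
            (if -((k:ℝ)/Real.sqrt n) ≤ Ssum s + b ∧ Ssum s + b ≤ (k:ℝ)/Real.sqrt n
              then (1:ℝ) else 0))
          + (1/2^n : ℝ) * (∑ s : Fin n → Bool,
            (if 6 - (k:ℝ)/Real.sqrt n ≤ Ssum s + b ∧ Ssum s + b ≤ 6 + (k:ℝ)/Real.sqrt n
              then (1:ℝ) else 0)) := by
          rw [Finset.sum_add_distrib, mul_add]
      _ ≤ 2*(k:ℝ)/Real.sqrt m + 2*(k:ℝ)/Real.sqrt m := by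
          have h1 := probbound (-((k:ℝ)/Real.sqrt n))
          have h2 := probbound (6 - (k:ℝ)/Real.sqrt n)
          rw [show -((k:ℝ)/Real.sqrt n) + 2*(k:ℝ)/Real.sqrt n = (k:ℝ)/Real.sqrt n by ring]
            at h1
          rw [show 6 - (k:ℝ)/Real.sqrt n + 2*(k:ℝ)/Real.sqrt n = 6 + (k:ℝ)/Real.sqrt n by ring]
            at h2
          exact add_le_add h1 h2
      _ = 4*(k:ℝ) / Real.sqrt m := by ring
  -- assemble
  have hrw : (∑ ω, p ω * ((1 / 2 ^ n : ℝ) * ∑ s : Fin n → Bool,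
        h ω * sigma6' ((∑ i, w i *
          (if i ∈ A then xa ω i else (if s i then 1 else -1) / Real.sqrt n)) + b)))
      - (∑ ω, p ω * h ω) * Q
      = ∑ ω, (p ω * h ω) * (P ω - Q) := by
    rw [Finset.sum_mul, ← Finset.sum_sub_distrib]
    refine Finset.sum_congr rfl (fun ω _ => ?_)
    have e1 : (∑ s : Fin n → Bool, h ω * sigma6' ((∑ i, w i *
          (if i ∈ A then xa ω i else (if s i then 1 else -1) / Real.sqrt n)) + b))
        = h ω * ∑ s : Fin n → Bool, sigma6' (a ω + Ssum s + b) := by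
      rw [Finset.mul_sum]
      exact Finset.sum_congr rfl (fun s _ => by rw [decomp ω s])
    rw [e1, hPdef]
    ring
  rw [hrw]
  calc |∑ ω, (p ω * h ω) * (P ω - Q)|
      ≤ ∑ ω, |(p ω * h ω) * (P ω - Q)| := Finset.abs_sum_le_sum_abs _ _
    _ ≤ ∑ ω, p ω * (4*(k:ℝ) / Real.sqrt m) := by
        refine Finset.sum_le_sum (fun ω _ => ?_)
        rw [abs_mul, abs_mul]
        have hh1 : |h ω| = 1 := by rcases hh ω with h' | h' <;> rw [h'] <;> norm_num
        rw [hh1, abs_of_nonneg (hp ω), mul_one]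
        exact mul_le_mul_of_nonneg_left (core ω) (hp ω)
    _ = 4*(k:ℝ) / Real.sqrt m := by
        rw [← Finset.sum_mul, hpsum, one_mul]
    _ = 4 * (k:ℝ) / Real.sqrt m := by ring
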